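/- With the data E₀, E₁, π₀, π₁, U, T₀, T₁, N₀, N₁ as in the context, assume π₀(N₀) ⊆ T₀ and π₁(N₁) ⊆ T₁. Define K₀ = { (λ,φ) ∈ W(E₀) : λ(u) = λ(0) − π₀(∫₀ᵘ φ(s) ds) for all u, λ(0) ∈ π₀(N₀), U⁻¹(λ(1)) ∈ T₁ } and K₁ = { (λ,φ) ∈ W(E₀) : λ(u) = λ(0) − π₀(∫₀ᵘ φ(s) ds) for all u, λ(0) ∈ T₀, U⁻¹(λ(1)) ∈ π₁(N₁) }. Then K₀^⊥ = K₁ (Ω-orthogonal taken in W(E₀)). -/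
import Mathlib


open MeasureTheory Set

/-- An element of `W(E)`: a pair `(λ, φ)` of continuous maps on `[0,1]` with values in `E`
and in the dual `E* = E →L[ℝ] ℝ` respectively. -/
structure WPair (E : Type*) [NormedAddCommGroup E] [NormedSpace ℝ E] where
  lam : ℝ → E
  phi : ℝ → E →L[ℝ] ℝ
  lam_cont : ContinuousOn lam (Icc 0 1)
  phi_cont : ContinuousOn phi (Icc 0 1)

/-- The alternating bilinear form `Ω((λ,φ),(λ',φ')) = ∫₀¹ (φ(u)(λ'(u)) − φ'(u)(λ(u))) du`. -/
noncomputable def Omega {E : Type*} [NormedAddCommGroup E] [NormedSpace ℝ E]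
    (w w' : WPair E) : ℝ :=
  ∫ u in (0:ℝ)..(1:ℝ), (w.phi u (w'.lam u) - w'.phi u (w.lam u))

/-- The `Ω`-orthogonal of a subset of `W(E)`. -/
def orth {E : Type*} [NormedAddCommGroup E] [NormedSpace ℝ E] (A : Set (WPair E)) :
    Set (WPair E) :=
  {w | ∀ a ∈ A, Omega a w = 0}

/-- The annihilator `N = { α ∈ E* : α vanishes on T }` of a subspace `T ⊆ E`. -/
def Ann {E : Type*} [NormedAddCommGroup E] [NormedSpace ℝ E] (T : Submodule ℝ E) :
    Set (E →L[ℝ] ℝ) :=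
  {α | ∀ v ∈ T, α v = 0}

/-- The space `V(T₀,T₁)` of solutions `(λ,φ)` of `λ(u) = λ(0) − π₀ ∫₀ᵘ φ` with boundary
conditions `λ(0) ∈ T₀` and `U⁻¹(λ(1)) ∈ T₁`. -/
noncomputable def VSet {E₀ E₁ : Type*}
    [NormedAddCommGroup E₀] [NormedSpace ℝ E₀]
    [NormedAddCommGroup E₁] [NormedSpace ℝ E₁]
    (π₀ : (E₀ →L[ℝ] ℝ) →ₗ[ℝ] E₀) (U : E₁ ≃L[ℝ] E₀)
    (T₀ : Submodule ℝ E₀) (T₁ : Submodule ℝ E₁) : Set (WPair E₀) :=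
  {w | (∀ u ∈ Icc (0:ℝ) 1, w.lam u = w.lam 0 - π₀ (∫ s in (0:ℝ)..u, w.phi s)) ∧
       w.lam 0 ∈ T₀ ∧ U.symm (w.lam 1) ∈ T₁}


section Helpers

/-- Clamp of `ℝ` onto `[0,1]`. -/
noncomputable def clamp (t : ℝ) : ℝ := (Set.projIcc (0:ℝ) 1 zero_le_one t : ℝ)

lemma clamp_continuous : Continuous clamp :=
  continuous_subtype_val.comp continuous_projIcc

lemma clamp_mem (t : ℝ) : clamp t ∈ Icc (0:ℝ) 1 := (Set.projIcc (0:ℝ) 1 zero_le_one t).2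

lemma clamp_eq {t : ℝ} (h : t ∈ Icc (0:ℝ) 1) : clamp t = t := by
  simp only [clamp, Set.projIcc_of_mem zero_le_one h]

/-- Separation by continuous linear functionals in finite dimension. -/
lemma exists_clm_separating {E : Type*} [NormedAddCommGroup E] [NormedSpace ℝ E]
    [FiniteDimensional ℝ E] (S : Submodule ℝ E) {x : E} (hx : x ∉ S) :
    ∃ f : E →L[ℝ] ℝ, (∀ v ∈ S, f v = 0) ∧ f x ≠ 0 := by
  have hq : S.mkQ x ≠ 0 := by
    simpa [Submodule.mkQ_apply, Submodule.Quotient.mk_eq_zero] using hx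
  obtain ⟨ℓ, hℓ⟩ : ∃ ℓ : Module.Dual ℝ (E ⧸ S), ℓ (S.mkQ x) ≠ 0 := by
    by_contra h
    push_neg at h
    exact hq ((Module.forall_dual_apply_eq_zero_iff ℝ _).1 h)
  refine ⟨LinearMap.toContinuousLinearMap (ℓ.comp S.mkQ), fun v hv => ?_, ?_⟩
  · have : S.mkQ v = 0 := by
      simpa [Submodule.mkQ_apply, Submodule.Quotient.mk_eq_zero] using hv
    simp [LinearMap.toContinuousLinearMap, this]
  · simpa [LinearMap.toContinuousLinearMap] using hℓ

lemma eq_zero_of_forall_clm {E : Type*} [NormedAddCommGroup E] [NormedSpace ℝ E]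
    [FiniteDimensional ℝ E] {x : E} (h : ∀ f : E →L[ℝ] ℝ, f x = 0) : x = 0 := by
  by_contra hx
  obtain ⟨f, -, hfx⟩ := exists_clm_separating (⊥ : Submodule ℝ E) (by simpa using hx)
  exact hfx (h f)

end Helpers



/-- `Ann T` as a submodule. -/
noncomputable def annSub {E : Type*} [NormedAddCommGroup E] [NormedSpace ℝ E] (T : Submodule ℝ E) :
    Submodule ℝ (E →L[ℝ] ℝ) where
  carrier := Ann T
  zero_mem' := fun v _ => rfl
  add_mem' := by
    intro a b ha hb v hv
    simp [ha v hv, hb v hv]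
  smul_mem' := by
    intro c a ha v hv
    simp [ha v hv]

lemma mem_of_forall_ann {E : Type*} [NormedAddCommGroup E] [NormedSpace ℝ E]
    [FiniteDimensional ℝ E] {T : Submodule ℝ E} {v : E}
    (h : ∀ α ∈ Ann T, α v = 0) : v ∈ T := by
  by_contra hv
  obtain ⟨f, hf0, hfv⟩ := exists_clm_separating T hv
  exact hfv (h f hf0)

/-- Continuous nonnegative function with zero integral over `[0,1]` vanishes on `[0,1]`. -/
lemma eq_zero_on_Icc_of_integral_eq_zero {f : ℝ → ℝ} (hf : Continuous f)
    (hnn : ∀ u, 0 ≤ f u) (h : ∫ u in (0:ℝ)..1, f u = 0) :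
    ∀ u ∈ Icc (0:ℝ) 1, f u = 0 := by
  have h1 : ∫ u in Ioc (0:ℝ) 1, f u = 0 := by
    rw [← intervalIntegral.integral_of_le zero_le_one]; exact h
  have hae : f =ᵐ[volume.restrict (Ioc (0:ℝ) 1)] 0 :=
    (setIntegral_eq_zero_iff_of_nonneg_ae (Filter.Eventually.of_forall hnn)
      (hf.integrableOn_Ioc)).1 h1
  have hae' : ∀ᵐ u ∂(volume : Measure ℝ), u ∈ Ioc (0:ℝ) 1 → f u = 0 :=
    (ae_restrict_iff' measurableSet_Ioc).1 hae
  have hmz : (volume : Measure ℝ) ({u | f u ≠ 0} ∩ Ioo 0 1) = 0 := by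
    refine measure_mono_null ?_ (ae_iff.1 hae')
    intro u hu
    simp only [mem_setOf_eq, Classical.not_imp]
    exact ⟨Ioo_subset_Ioc_self hu.2, hu.1⟩
  have hopen : IsOpen ({u : ℝ | f u ≠ 0} ∩ Ioo 0 1) :=
    (isOpen_ne.preimage hf).inter isOpen_Ioo
  have hempty : ({u : ℝ | f u ≠ 0} ∩ Ioo 0 1) = ∅ := by
    rwa [hopen.measure_eq_zero_iff volume] at hmz
  have hIoo : EqOn f 0 (Ioo 0 1) := by
    intro u hu
    have hnm : u ∉ ({u : ℝ | f u ≠ 0} ∩ Ioo 0 1) := by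
      rw [hempty]; exact notMem_empty u
    by_contra hne
    exact hnm ⟨by simpa using hne, hu⟩
  have := hIoo.closure hf continuous_const
  rw [closure_Ioo (zero_ne_one)] at this
  exact fun u hu => this hu

/-- FTC: primitive of a continuous function. -/
lemma hasDerivAt_primitive {X : Type*} [NormedAddCommGroup X] [NormedSpace ℝ X]
    [CompleteSpace X] {f : ℝ → X} (hf : Continuous f) (u : ℝ) :
    HasDerivAt (fun t => ∫ s in (0:ℝ)..t, f s) (f u) u :=
  intervalIntegral.integral_hasDerivAt_right (hf.intervalIntegrable _ _)
    (hf.stronglyMeasurableAtFilter _ _) hf.continuousAt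
section OmegaFormula

variable {E₀ : Type*} [NormedAddCommGroup E₀] [NormedSpace ℝ E₀] [FiniteDimensional ℝ E₀]

/-- Clamped integral agrees with the original one on `[0,1]`. -/
lemma integral_clamp_eq {X : Type*} [NormedAddCommGroup X] [NormedSpace ℝ X]
    {f : ℝ → X} {u : ℝ} (hu : u ∈ Icc (0:ℝ) 1) :
    (∫ s in (0:ℝ)..u, f (clamp s)) = ∫ s in (0:ℝ)..u, f s := by
  apply intervalIntegral.integral_congr
  intro s hs
  rw [uIcc_of_le hu.1] at hs
  have h : s ∈ Icc (0:ℝ) 1 := ⟨hs.1, hs.2.trans hu.2⟩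
  show f (clamp s) = f s
  rw [clamp_eq h]

lemma phiC_continuous (w : WPair E₀) : Continuous fun s => w.phi (clamp s) :=
  w.phi_cont.comp_continuous clamp_continuous clamp_mem

lemma lamC_continuous (w : WPair E₀) : Continuous fun s => w.lam (clamp s) :=
  w.lam_cont.comp_continuous clamp_continuous clamp_mem

/-- Master formula: if `a` and `w` both satisfy the linear ODE, then
`Ω(a,w) = F₁(w.lam 1) - G₁(a.lam 0)` where `F₁ = ∫₀¹ a.phi`, `G₁ = ∫₀¹ w.phi`. -/
lemma omega_formula (π₀ : (E₀ →L[ℝ] ℝ) →ₗ[ℝ] E₀)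
    (hskew₀ : ∀ α β : E₀ →L[ℝ] ℝ, α (π₀ β) = - β (π₀ α))
    (a w : WPair E₀)
    (ha : ∀ u ∈ Icc (0:ℝ) 1, a.lam u = a.lam 0 - π₀ (∫ s in (0:ℝ)..u, a.phi s))
    (hw : ∀ u ∈ Icc (0:ℝ) 1, w.lam u = w.lam 0 - π₀ (∫ s in (0:ℝ)..u, w.phi s)) :
    Omega a w = (∫ s in (0:ℝ)..1, a.phi s) (w.lam 1)
      - (∫ s in (0:ℝ)..1, w.phi s) (a.lam 0) := by
  classical
  set π₀L : (E₀ →L[ℝ] ℝ) →L[ℝ] E₀ := LinearMap.toContinuousLinearMap π₀ with hπ₀L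
  have hπ₀L_apply : ∀ β, π₀L β = π₀ β := fun β => rfl
  set f : ℝ → E₀ →L[ℝ] ℝ := fun s => a.phi (clamp s) with hf_def
  set g : ℝ → E₀ →L[ℝ] ℝ := fun s => w.phi (clamp s) with hg_def
  have hf : Continuous f := phiC_continuous a
  have hg : Continuous g := phiC_continuous w
  set F : ℝ → E₀ →L[ℝ] ℝ := fun t => ∫ s in (0:ℝ)..t, f s with hF_def
  set G : ℝ → E₀ →L[ℝ] ℝ := fun t => ∫ s in (0:ℝ)..t, g s with hG_def
  have hF : ∀ t, HasDerivAt F (f t) t := hasDerivAt_primitive hf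
  have hG : ∀ t, HasDerivAt G (g t) t := hasDerivAt_primitive hg
  have hFc : Continuous F := by
    rw [continuous_iff_continuousAt]; exact fun t => (hF t).continuousAt
  have hGc : Continuous G := by
    rw [continuous_iff_continuousAt]; exact fun t => (hG t).continuousAt
  -- lam in terms of primitives
  have hlam_a : ∀ u ∈ Icc (0:ℝ) 1, a.lam u = a.lam 0 - π₀L (F u) := by
    intro u hu
    have h1 : F u = ∫ s in (0:ℝ)..u, a.phi s := by
      simp only [hF_def, hf_def]; exact integral_clamp_eq hu
    rw [ha u hu, hπ₀L_apply, h1]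
  have hlam_w : ∀ u ∈ Icc (0:ℝ) 1, w.lam u = w.lam 0 - π₀L (G u) := by
    intro u hu
    have h1 : G u = ∫ s in (0:ℝ)..u, w.phi s := by
      simp only [hG_def, hg_def]; exact integral_clamp_eq hu
    rw [hw u hu, hπ₀L_apply, h1]
  -- Step 1: rewrite the integrand
  have step1 : Omega a w = ∫ u in (0:ℝ)..1,
      (f u (w.lam 0) - f u (π₀L (G u)) - (g u (a.lam 0) - g u (π₀L (F u)))) := by
    unfold Omega
    apply intervalIntegral.integral_congr
    intro u hu
    rw [uIcc_of_le zero_le_one] at hu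
    show a.phi u (w.lam u) - w.phi u (a.lam u)
      = f u (w.lam 0) - f u (π₀L (G u)) - (g u (a.lam 0) - g u (π₀L (F u)))
    have h1 : f u = a.phi u := by simp only [hf_def]; rw [clamp_eq hu]
    have h2 : g u = w.phi u := by simp only [hg_def]; rw [clamp_eq hu]
    rw [h1, h2, hlam_a u hu, hlam_w u hu, map_sub, map_sub]
  -- integrability of the pieces
  have hint1 : IntervalIntegrable (fun u => f u (w.lam 0)) volume 0 1 :=
    (hf.clm_apply continuous_const).intervalIntegrable _ _
  have hint2 : IntervalIntegrable (fun u => f u (π₀L (G u))) volume 0 1 :=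
    (hf.clm_apply (π₀L.continuous.comp hGc)).intervalIntegrable _ _
  have hint3 : IntervalIntegrable (fun u => g u (a.lam 0)) volume 0 1 :=
    (hg.clm_apply continuous_const).intervalIntegrable _ _
  have hint4 : IntervalIntegrable (fun u => g u (π₀L (F u))) volume 0 1 :=
    (hg.clm_apply (π₀L.continuous.comp hFc)).intervalIntegrable _ _
  -- Step 3: the boundary-evaluation integrals
  have ev1 : (∫ u in (0:ℝ)..1, f u (w.lam 0)) = F 1 (w.lam 0) := by
    have := (ContinuousLinearMap.apply ℝ ℝ (w.lam 0)).intervalIntegral_comp_comm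
      (hf.intervalIntegrable (μ := volume) (0:ℝ) 1)
    simpa [ContinuousLinearMap.apply] using this
  have ev2 : (∫ u in (0:ℝ)..1, g u (a.lam 0)) = G 1 (a.lam 0) := by
    have := (ContinuousLinearMap.apply ℝ ℝ (a.lam 0)).intervalIntegral_comp_comm
      (hg.intervalIntegrable (μ := volume) (0:ℝ) 1)
    simpa [ContinuousLinearMap.apply] using this
  -- Step 4: integration by parts for the bilinear part
  have hP : ∀ u, HasDerivAt (fun t => F t (π₀L (G t)))
      (f u (π₀L (G u)) - g u (π₀L (F u))) u := by
    intro u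
    have h1 : HasDerivAt (fun t => π₀L (G t)) (π₀L (g u)) u :=
      (π₀L.hasFDerivAt.comp_hasDerivAt u (hG u))
    have h2 := (hF u).clm_apply h1
    have : F u (π₀L (g u)) = - g u (π₀L (F u)) := by
      rw [hπ₀L_apply, hπ₀L_apply]; exact hskew₀ _ _
    rw [this] at h2
    simpa [sub_eq_add_neg] using h2
  have parts : (∫ u in (0:ℝ)..1, (f u (π₀L (G u)) - g u (π₀L (F u))))
      = F 1 (π₀L (G 1)) := by
    have hint : IntervalIntegrable (fun u => f u (π₀L (G u)) - g u (π₀L (F u)))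
        volume 0 1 := hint2.sub hint4
    have := intervalIntegral.integral_eq_sub_of_hasDerivAt
      (f := fun t => F t (π₀L (G t)))
      (f' := fun u => f u (π₀L (G u)) - g u (π₀L (F u)))
      (fun u _ => hP u) hint
    rw [this]
    have hF0 : F 0 = 0 := intervalIntegral.integral_same
    simp [hF0]
  -- assemble
  rw [step1]
  rw [intervalIntegral.integral_sub (hint1.sub hint2) (hint3.sub hint4),
      intervalIntegral.integral_sub hint1 hint2,
      intervalIntegral.integral_sub hint3 hint4, ev1, ev2]
  have hF1 : (∫ s in (0:ℝ)..1, a.phi s) = F 1 := by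
    simp only [hF_def, hf_def]
    exact (integral_clamp_eq (by norm_num : (1:ℝ) ∈ Icc (0:ℝ) 1)).symm
  have hG1 : (∫ s in (0:ℝ)..1, w.phi s) = G 1 := by
    simp only [hG_def, hg_def]
    exact (integral_clamp_eq (by norm_num : (1:ℝ) ∈ Icc (0:ℝ) 1)).symm
  have hw1 : w.lam 1 = w.lam 0 - π₀L (G 1) :=
    hlam_w 1 (by norm_num)
  have key : (∫ u in (0:ℝ)..1, f u (π₀L (G u))) - ∫ u in (0:ℝ)..1, g u (π₀L (F u))
      = F 1 (π₀L (G 1)) := by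
    rw [← intervalIntegral.integral_sub hint2 hint4]; exact parts
  rw [hF1, hG1, hw1]
  have : F 1 (w.lam 0 - π₀L (G 1)) = F 1 (w.lam 0) - F 1 (π₀L (G 1)) := map_sub _ _ _
  rw [this, ← key]
  ring

end OmegaFormula
section TestPairs

variable {E₀ : Type*} [NormedAddCommGroup E₀] [NormedSpace ℝ E₀] [FiniteDimensional ℝ E₀]

/-- Test element: `λ(u) = v₀ + (q 0 - q u) • π₀ α`, `φ(u) = q' u • α`. -/
noncomputable def testPair (π₀ : (E₀ →L[ℝ] ℝ) →ₗ[ℝ] E₀) (α : E₀ →L[ℝ] ℝ) (v₀ : E₀)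
    (q q' : ℝ → ℝ) (hq : ∀ u, HasDerivAt q (q' u) u) (hq' : Continuous q') :
    WPair E₀ where
  lam := fun u => v₀ + (q 0 - q u) • π₀ α
  phi := fun u => q' u • α
  lam_cont := by
    have hqc : Continuous q := by
      rw [continuous_iff_continuousAt]; exact fun t => (hq t).continuousAt
    exact (continuous_const.add
      ((continuous_const.sub hqc).smul continuous_const)).continuousOn
  phi_cont := (hq'.smul continuous_const).continuousOn

lemma testPair_lam (π₀ : (E₀ →L[ℝ] ℝ) →ₗ[ℝ] E₀) (α : E₀ →L[ℝ] ℝ) (v₀ : E₀)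
    (q q' : ℝ → ℝ) (hq : ∀ u, HasDerivAt q (q' u) u) (hq' : Continuous q') :
    (testPair π₀ α v₀ q q' hq hq').lam = fun u => v₀ + (q 0 - q u) • π₀ α := rfl

lemma testPair_phi (π₀ : (E₀ →L[ℝ] ℝ) →ₗ[ℝ] E₀) (α : E₀ →L[ℝ] ℝ) (v₀ : E₀)
    (q q' : ℝ → ℝ) (hq : ∀ u, HasDerivAt q (q' u) u) (hq' : Continuous q') :
    (testPair π₀ α v₀ q q' hq hq').phi = fun u => q' u • α := rfl

lemma testPair_integral_phi (π₀ : (E₀ →L[ℝ] ℝ) →ₗ[ℝ] E₀) (α : E₀ →L[ℝ] ℝ) (v₀ : E₀)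
    (q q' : ℝ → ℝ) (hq : ∀ u, HasDerivAt q (q' u) u) (hq' : Continuous q') (u : ℝ) :
    (∫ s in (0:ℝ)..u, (testPair π₀ α v₀ q q' hq hq').phi s) = (q u - q 0) • α := by
  rw [testPair_phi]
  rw [intervalIntegral.integral_smul_const]
  congr 1
  exact intervalIntegral.integral_eq_sub_of_hasDerivAt (fun x _ => hq x)
    (hq'.intervalIntegrable _ _)

lemma testPair_sol (π₀ : (E₀ →L[ℝ] ℝ) →ₗ[ℝ] E₀) (α : E₀ →L[ℝ] ℝ) (v₀ : E₀)
    (q q' : ℝ → ℝ) (hq : ∀ u, HasDerivAt q (q' u) u) (hq' : Continuous q') :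
    ∀ u ∈ Icc (0:ℝ) 1, (testPair π₀ α v₀ q q' hq hq').lam u
      = (testPair π₀ α v₀ q q' hq hq').lam 0
        - π₀ (∫ s in (0:ℝ)..u, (testPair π₀ α v₀ q q' hq hq').phi s) := by
  intro u _
  rw [testPair_integral_phi, testPair_lam, _root_.map_smul]
  simp only [sub_self, zero_smul, add_zero, sub_smul]
  module

end TestPairs
section ODE

variable {E₀ : Type*} [NormedAddCommGroup E₀] [NormedSpace ℝ E₀] [FiniteDimensional ℝ E₀]

/-- If `w` is `Ω`-orthogonal to all the closed-loop test pairs, then `w` satisfies the ODE. -/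
lemma ode_of_orth (π₀ : (E₀ →L[ℝ] ℝ) →ₗ[ℝ] E₀)
    (hskew₀ : ∀ α β : E₀ →L[ℝ] ℝ, α (π₀ β) = - β (π₀ α))
    (w : WPair E₀)
    (hw : ∀ (α : E₀ →L[ℝ] ℝ) (q q' : ℝ → ℝ) (hq : ∀ u, HasDerivAt q (q' u) u)
      (hq' : Continuous q'), q 0 = 0 → q 1 = 0 →
      Omega (testPair π₀ α 0 q q' hq hq') w = 0) :
    ∀ u ∈ Icc (0:ℝ) 1, w.lam u = w.lam 0 - π₀ (∫ s in (0:ℝ)..u, w.phi s) := by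
  intro u hu
  rw [← sub_eq_zero]
  apply eq_zero_of_forall_clm
  intro α
  rw [map_sub, map_sub]
  set π₀L : (E₀ →L[ℝ] ℝ) →L[ℝ] E₀ := LinearMap.toContinuousLinearMap π₀ with hπ₀L
  set A : (E₀ →L[ℝ] ℝ) →L[ℝ] ℝ := α.comp π₀L with hA
  have hA_apply : ∀ β, A β = α (π₀ β) := fun β => rfl
  set k : ℝ → ℝ := fun s => A (w.phi (clamp s)) with hk_def
  have hk : Continuous k := A.continuous.comp (phiC_continuous w)
  set K : ℝ → ℝ := fun t => ∫ s in (0:ℝ)..t, k s with hK_def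
  have hK : ∀ t, HasDerivAt K (k t) t := hasDerivAt_primitive hk
  have hKc : Continuous K := by
    rw [continuous_iff_continuousAt]; exact fun t => (hK t).continuousAt
  set H : ℝ → ℝ := fun t => α (w.lam (clamp t)) + K t with hH_def
  have hHc : Continuous H :=
    (α.continuous.comp (lamC_continuous w)).add hKc
  set c : ℝ := ∫ s in (0:ℝ)..1, H s with hc_def
  set q : ℝ → ℝ := fun t => ∫ s in (0:ℝ)..t, (H s - c) with hq_def
  have hq'c : Continuous (fun t => H t - c) := hHc.sub continuous_const
  have hq : ∀ t, HasDerivAt q (H t - c) t := hasDerivAt_primitive hq'c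
  have hqc : Continuous q := by
    rw [continuous_iff_continuousAt]; exact fun t => (hq t).continuousAt
  have hq0 : q 0 = 0 := intervalIntegral.integral_same
  have hq1 : q 1 = 0 := by
    simp only [hq_def]
    rw [intervalIntegral.integral_sub (hHc.intervalIntegrable _ _)
      intervalIntegrable_const]
    simp [hc_def]
  have homega := hw α q (fun t => H t - c) hq hq'c hq0 hq1
  -- rewrite Omega as a concrete integral
  have hcongr : Omega (testPair π₀ α 0 q (fun t => H t - c) hq hq'c) w
      = ∫ s in (0:ℝ)..1, ((H s - c) * (H s - K s) - q s * k s) := by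
    unfold Omega
    apply intervalIntegral.integral_congr
    intro s hs
    rw [uIcc_of_le zero_le_one] at hs
    show (testPair π₀ α 0 q (fun t => H t - c) hq hq'c).phi s (w.lam s)
        - w.phi s ((testPair π₀ α 0 q (fun t => H t - c) hq hq'c).lam s)
      = (H s - c) * (H s - K s) - q s * k s
    rw [testPair_phi, testPair_lam]
    have e1 : α (w.lam s) = H s - K s := by
      simp only [hH_def]
      rw [clamp_eq hs]
      ring
    have e2 : w.phi s (π₀ α) = - k s := by
      rw [hskew₀]
      simp only [hk_def]
      rw [clamp_eq hs, hA_apply]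
    simp only [ContinuousLinearMap.smul_apply, smul_eq_mul, zero_add, hq0, zero_sub]
    have e3 : (w.phi s) (-q s • π₀ α) = -q s * ((w.phi s) (π₀ α)) := by
      rw [(w.phi s).map_smul]; simp
    rw [e1, e3, e2]
    ring
  rw [hcongr] at homega
  -- integration by parts
  have hPm : ∀ t, HasDerivAt (fun t => q t * K t) ((H t - c) * K t + q t * k t) t :=
    fun t => (hq t).mul (hK t)
  have hint2 : IntervalIntegrable (fun s => (H s - c) * K s + q s * k s) volume 0 1 :=
    ((hq'c.mul hKc).add (hqc.mul hk)).intervalIntegrable _ _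
  have parts : (∫ s in (0:ℝ)..1, ((H s - c) * K s + q s * k s)) = 0 := by
    rw [intervalIntegral.integral_eq_sub_of_hasDerivAt (fun t _ => hPm t) hint2]
    simp [hq0, hq1]
  -- combine: ∫ (H-c)^2 = 0
  have hint1 : IntervalIntegrable (fun s => (H s - c) * (H s - K s) - q s * k s)
      volume 0 1 :=
    ((hq'c.mul (hHc.sub hKc)).sub (hqc.mul hk)).intervalIntegrable _ _
  have hint3 : IntervalIntegrable (fun s => (H s - c) * c) volume 0 1 :=
    (hq'c.mul continuous_const).intervalIntegrable _ _
  have hI3 : (∫ s in (0:ℝ)..1, (H s - c) * c) = 0 := by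
    rw [intervalIntegral.integral_mul_const]
    have : (∫ s in (0:ℝ)..1, (H s - c)) = q 1 := rfl
    rw [this, hq1, zero_mul]
  have hsq : (∫ s in (0:ℝ)..1, (H s - c)^2) = 0 := by
    have e : (∫ s in (0:ℝ)..1, (H s - c)^2)
        = (∫ s in (0:ℝ)..1, (((H s - c) * (H s - K s) - q s * k s)
            + ((H s - c) * K s + q s * k s) - (H s - c) * c)) := by
      apply intervalIntegral.integral_congr
      intro s _
      show (H s - c)^2 = ((H s - c) * (H s - K s) - q s * k s)
          + ((H s - c) * K s + q s * k s) - (H s - c) * c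
      ring
    rw [e, intervalIntegral.integral_sub (hint1.add hint2) hint3,
      intervalIntegral.integral_add hint1 hint2, homega, parts, hI3]
    ring
  have hzero := eq_zero_on_Icc_of_integral_eq_zero (hq'c.pow 2)
    (fun s => sq_nonneg _) hsq
  have hHconst : ∀ s ∈ Icc (0:ℝ) 1, H s = c := by
    intro s hs
    have := hzero s hs
    have := pow_eq_zero_iff (n := 2) (by norm_num) |>.1 this
    linarith [this]
  -- conclude
  have hK0 : K 0 = 0 := intervalIntegral.integral_same
  have hwint : IntervalIntegrable w.phi volume 0 u := by
    apply ContinuousOn.intervalIntegrable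
    apply w.phi_cont.mono
    rw [uIcc_of_le hu.1]
    exact fun s hs => ⟨hs.1, hs.2.trans hu.2⟩
  have hKu : K u = α (π₀ (∫ s in (0:ℝ)..u, w.phi s)) := by
    have h1 : K u = ∫ s in (0:ℝ)..u, A (w.phi s) := by
      simp only [hK_def, hk_def]
      exact integral_clamp_eq hu (f := fun s => A (w.phi s))
    rw [h1, A.intervalIntegral_comp_comm hwint, hA_apply]
  have hHu : H u = c := hHconst u hu
  have hH0 : H 0 = c := hHconst 0 ⟨le_refl 0, zero_le_one⟩
  have e0 : H 0 = α (w.lam 0) := by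
    simp only [hH_def, hK0, add_zero]
    rw [clamp_eq (⟨le_refl 0, zero_le_one⟩ : (0:ℝ) ∈ Icc (0:ℝ) 1)]
  have eu : H u = α (w.lam u) + K u := by
    simp only [hH_def]
    rw [clamp_eq hu]
  have : α (w.lam u) + K u = α (w.lam 0) := by
    rw [← eu, ← e0, hHu, hH0]
  rw [hKu] at this
  linarith [this]

end ODE
theorem dual_pair_kernels_orthogonal
    (E₀ E₁ : Type*)
    [NormedAddCommGroup E₀] [NormedSpace ℝ E₀] [FiniteDimensional ℝ E₀]
    [NormedAddCommGroup E₁] [NormedSpace ℝ E₁] [FiniteDimensional ℝ E₁]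
    (π₀ : (E₀ →L[ℝ] ℝ) →ₗ[ℝ] E₀) (π₁ : (E₁ →L[ℝ] ℝ) →ₗ[ℝ] E₁)
    (hskew₀ : ∀ α β : E₀ →L[ℝ] ℝ, α (π₀ β) = - β (π₀ α))
    (hskew₁ : ∀ α β : E₁ →L[ℝ] ℝ, α (π₁ β) = - β (π₁ α))
    (U : E₁ ≃L[ℝ] E₀)
    (hU : ∀ α : E₀ →L[ℝ] ℝ, U (π₁ (α.comp (U : E₁ →L[ℝ] E₀))) = π₀ α)
    (T₀ : Submodule ℝ E₀) (T₁ : Submodule ℝ E₁)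
    (hT₀ : ∀ α ∈ Ann T₀, π₀ α ∈ T₀) (hT₁ : ∀ α ∈ Ann T₁, π₁ α ∈ T₁) :
    orth {w : WPair E₀ |
        (∀ u ∈ Icc (0:ℝ) 1, w.lam u = w.lam 0 - π₀ (∫ s in (0:ℝ)..u, w.phi s)) ∧
        w.lam 0 ∈ π₀ '' Ann T₀ ∧ U.symm (w.lam 1) ∈ T₁} =
      {w : WPair E₀ |
        (∀ u ∈ Icc (0:ℝ) 1, w.lam u = w.lam 0 - π₀ (∫ s in (0:ℝ)..u, w.phi s)) ∧
        w.lam 0 ∈ T₀ ∧ U.symm (w.lam 1) ∈ π₁ '' Ann T₁} := by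
  have zero_ann₀ : (0 : E₀ →L[ℝ] ℝ) ∈ Ann T₀ := fun v _ => rfl
  have hqid : ∀ t : ℝ, HasDerivAt (fun t : ℝ => t) ((fun _ : ℝ => (1:ℝ)) t) t :=
    fun t => hasDerivAt_id t
  ext w
  simp only [orth, mem_setOf_eq]
  constructor
  · -- hard direction
    intro hw
    -- Step A : the ODE
    have hODE : ∀ u ∈ Icc (0:ℝ) 1,
        w.lam u = w.lam 0 - π₀ (∫ s in (0:ℝ)..u, w.phi s) := by
      apply ode_of_orth π₀ hskew₀ w
      intro α q q' hq hq' hq0 hq1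
      apply hw
      refine ⟨testPair_sol π₀ α 0 q q' hq hq', ?_, ?_⟩
      · have h : (testPair π₀ α 0 q q' hq hq').lam 0 = 0 := by
          rw [testPair_lam]; simp
        rw [h]
        exact ⟨0, zero_ann₀, map_zero π₀⟩
      · have h : (testPair π₀ α 0 q q' hq hq').lam 1 = 0 := by
          rw [testPair_lam]; simp [hq0, hq1]
        rw [h]
        rw [map_zero]
        exact T₁.zero_mem
    have hπG1 : π₀ (∫ s in (0:ℝ)..1, w.phi s) = w.lam 0 - w.lam 1 := by
      have h1 := hODE 1 (by norm_num)
      rw [h1]; abel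
    -- Step B1 : w.lam 0 ∈ T₀
    have hmem0 : w.lam 0 ∈ T₀ := by
      apply mem_of_forall_ann
      intro α hα
      have hasol := testPair_sol π₀ α (π₀ α) (fun t => t) (fun _ => 1) hqid
        continuous_const
      have hal0 : (testPair π₀ α (π₀ α) (fun t => t) (fun _ => 1) hqid
          continuous_const).lam 0 = π₀ α := by
        rw [testPair_lam]; simp
      have h0 := hw (testPair π₀ α (π₀ α) (fun t => t) (fun _ => 1) hqid
          continuous_const) ?memK
      case memK =>
        refine ⟨hasol, ?_, ?_⟩
        · rw [hal0]; exact ⟨α, hα, rfl⟩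
        · have h : (testPair π₀ α (π₀ α) (fun t => t) (fun _ => 1) hqid
              continuous_const).lam 1 = 0 := by
            rw [testPair_lam]; simp
          rw [h, map_zero]; exact T₁.zero_mem
      rw [omega_formula π₀ hskew₀ _ w hasol hODE] at h0
      rw [testPair_integral_phi, hal0] at h0
      have hFa : ((1:ℝ) - (fun t : ℝ => t) 0) • α = α := by norm_num
      rw [hFa] at h0
      have e1 : (∫ s in (0:ℝ)..1, w.phi s) (π₀ α)
          = - α (π₀ (∫ s in (0:ℝ)..1, w.phi s)) := hskew₀ _ α
      rw [e1, hπG1, map_sub] at h0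
      linarith
    -- Step B2 : U.symm (w.lam 1) ∈ π₁ '' Ann T₁
    have hmem1 : U.symm (w.lam 1) ∈ π₁ '' Ann T₁ := by
      by_contra hx
      have hx' : U.symm (w.lam 1) ∉ Submodule.map π₁ (annSub T₁) := by
        intro hmem
        obtain ⟨β, hβ, hβx⟩ := hmem
        exact hx ⟨β, hβ, hβx⟩
      obtain ⟨δ, hδ0, hδx⟩ := exists_clm_separating _ hx'
      have hπδ : π₁ δ ∈ T₁ := by
        apply mem_of_forall_ann
        intro β hβ
        have h1 : δ (π₁ β) = 0 := hδ0 _ (Submodule.mem_map_of_mem hβ)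
        have h2 := hskew₁ β δ
        rw [h1] at h2
        simpa using h2
      set γ : E₀ →L[ℝ] ℝ := δ.comp ((U.symm : E₀ ≃L[ℝ] E₁) : E₀ →L[ℝ] E₁) with hγ
      have hγU : γ.comp (U : E₁ →L[ℝ] E₀) = δ := by
        ext v
        simp [hγ]
      have hUγ : U.symm (π₀ γ) = π₁ δ := by
        have h := hU γ
        rw [hγU] at h
        rw [← h, ContinuousLinearEquiv.symm_apply_apply]
      have hasol := testPair_sol π₀ γ 0 (fun t => t) (fun _ => 1) hqid continuous_const
      have hal0 : (testPair π₀ γ 0 (fun t => t) (fun _ => 1) hqid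
          continuous_const).lam 0 = 0 := by
        rw [testPair_lam]; simp
      have h0 := hw (testPair π₀ γ 0 (fun t => t) (fun _ => 1) hqid
          continuous_const) ?memK2
      case memK2 =>
        refine ⟨hasol, ?_, ?_⟩
        · rw [hal0]; exact ⟨0, zero_ann₀, map_zero π₀⟩
        · have h : (testPair π₀ γ 0 (fun t => t) (fun _ => 1) hqid
              continuous_const).lam 1 = -(π₀ γ) := by
            rw [testPair_lam]; simp
          rw [h, map_neg, hUγ]
          exact neg_mem hπδ
      rw [omega_formula π₀ hskew₀ _ w hasol hODE] at h0
      rw [testPair_integral_phi, hal0, map_zero] at h0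
      have hFa : ((1:ℝ) - (fun t : ℝ => t) 0) • γ = γ := by norm_num
      rw [hFa] at h0
      apply hδx
      have : γ (w.lam 1) = δ (U.symm (w.lam 1)) := rfl
      rw [← this]
      linarith
    exact ⟨hODE, hmem0, hmem1⟩
  · -- easy direction
    rintro ⟨hwODE, hw0, β, hβ, hβ1⟩ a ⟨haODE, ⟨α, hα, hα0⟩, ha1⟩
    rw [omega_formula π₀ hskew₀ a w haODE hwODE]
    have hπF1 : π₀ (∫ s in (0:ℝ)..1, a.phi s) = a.lam 0 - a.lam 1 := by
      have h1 := haODE 1 (by norm_num)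
      rw [h1]; abel
    have hπG1 : π₀ (∫ s in (0:ℝ)..1, w.phi s) = w.lam 0 - w.lam 1 := by
      have h1 := hwODE 1 (by norm_num)
      rw [h1]; abel
    have hw1 : w.lam 1 = U (π₁ β) := by
      rw [hβ1, ContinuousLinearEquiv.apply_symm_apply]
    -- e1 : G1 (a.lam 0) = α (w.lam 1)
    have e1 : (∫ s in (0:ℝ)..1, w.phi s) (a.lam 0) = α (w.lam 1) := by
      rw [← hα0, hskew₀ _ α, hπG1, map_sub]
      have h : α (w.lam 0) = 0 := hα _ hw0
      rw [h]
      ring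
    -- e2 : α (w.lam 1) = - β (U.symm (π₀ α))
    have e2 : α (w.lam 1) = - β (U.symm (π₀ α)) := by
      rw [hw1]
      have h1 : α (U (π₁ β)) = (α.comp (U : E₁ →L[ℝ] E₀)) (π₁ β) := rfl
      have h2 : π₁ (α.comp (U : E₁ →L[ℝ] E₀)) = U.symm (π₀ α) := by
        rw [← hU α, ContinuousLinearEquiv.symm_apply_apply]
      rw [h1, hskew₁ _ β, h2]
    -- e3 : F1 (w.lam 1) = - β (U.symm (a.lam 0))
    have e3 : (∫ s in (0:ℝ)..1, a.phi s) (w.lam 1)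
        = - β (U.symm (a.lam 0)) := by
      rw [hw1]
      have h1 : (∫ s in (0:ℝ)..1, a.phi s) (U (π₁ β))
          = ((∫ s in (0:ℝ)..1, a.phi s).comp (U : E₁ →L[ℝ] E₀)) (π₁ β) := rfl
      have h2 : π₁ ((∫ s in (0:ℝ)..1, a.phi s).comp (U : E₁ →L[ℝ] E₀))
          = U.symm (π₀ (∫ s in (0:ℝ)..1, a.phi s)) := by
        rw [← hU (∫ s in (0:ℝ)..1, a.phi s), ContinuousLinearEquiv.symm_apply_apply]
      rw [h1, hskew₁ _ β, h2, hπF1, map_sub, map_sub]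
      have h3 : β (U.symm (a.lam 1)) = 0 := hβ _ ha1
      rw [h3]
      ring
    rw [e1, e2, e3, ← hα0]
    ring
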